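/- arXiv:1409.8350 — 2 statements merged into one kernel-verified Lean document; each statement's English description precedes it below -/
import Mathlib

section
/- Suppose the Gauss periods η_a, 0 ≤ a ≤ N−1, take exactly ℓ distinct values α₁, …, α_ℓ, and let I_i = {a ∈ ℤ_N : η_a = α_i}. Then each I_i is invariant under multiplication by p on ℤ_N (if a ∈ I_i then pa mod N ∈ I_i). Moreover, if m := gcd{ord_n(p) : n > 1, n ∣ N} ≥ 2, then there exists a unique index i₀ with |I_{i₀}| ≡ 1 (mod m), and |I_i| ≡ 0 (mod m) for all i ≠ i₀. -/
open scoped BigOperators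

lemma trace_frob (p : ℕ) [Fact p.Prime] (F : Type) [Field F] [Fintype F] [Algebra (ZMod p) F]
    (x : F) : Algebra.trace (ZMod p) F (x ^ p) = Algebra.trace (ZMod p) F x := by
  haveI : CharP F p := charP_of_injective_algebraMap' (A := F) (ZMod p) p
  haveI : FiniteDimensional (ZMod p) F := Module.Finite.of_finite
  have hbij : Function.Bijective (frobenius F p) :=
    Finite.injective_iff_bijective.mp (frobenius F p).injective
  let e : F ≃ₐ[ZMod p] F :=
    { RingEquiv.ofBijective (frobenius F p) hbij with
      commutes' := fun r => by
        show frobenius F p (algebraMap (ZMod p) F r) = algebraMap (ZMod p) F r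
        rw [frobenius_def, ← map_pow, ZMod.pow_card] }
  have he : ∀ y : F, e y = y ^ p := fun y => rfl
  have h1 := trace_eq_sum_automorphisms (K := ZMod p) x
  have h2 := trace_eq_sum_automorphisms (K := ZMod p) (x ^ p)
  have key : ∑ σ : F ≃ₐ[ZMod p] F, σ (x ^ p) = ∑ σ : F ≃ₐ[ZMod p] F, σ x :=
    Fintype.sum_bijective (· * e) (Group.mulRight_bijective e) _ _
      (fun σ => by rw [AlgEquiv.mul_apply, he])
  apply (algebraMap (ZMod p) F).injective
  rw [h1, h2, key]

lemma key_iff {p N : ℕ} [NeZero N] (hp : 0 < p) (x : ZMod N) (s : ℕ) :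
    (p : ZMod N) ^ s * x = x ↔ orderOf ((p : ZMod (addOrderOf x))) ∣ s := by
  have h1 : (p : ZMod N) ^ s * x = x ↔ (p ^ s - 1) • x = 0 := by
    constructor
    · intro h
      have : ((p ^ s - 1 : ℕ) : ZMod N) * x = 0 := by
        rw [Nat.cast_sub (Nat.one_le_pow _ _ hp)]
        push_cast
        rw [sub_mul, one_mul, h, sub_self]
      rwa [nsmul_eq_mul]
    · intro h
      rw [nsmul_eq_mul, Nat.cast_sub (Nat.one_le_pow _ _ hp)] at h
      push_cast at h
      rw [sub_mul, one_mul, sub_eq_zero] at h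
      simpa using h
  rw [h1, ← addOrderOf_dvd_iff_nsmul_eq_zero]
  have h2 : addOrderOf x ∣ p ^ s - 1 ↔ (1 : ℕ) ≡ p ^ s [MOD addOrderOf x] :=
    (Nat.modEq_iff_dvd' (Nat.one_le_pow _ _ hp)).symm
  rw [h2, Nat.ModEq.comm, ← ZMod.natCast_eq_natCast_iff]
  push_cast
  rw [orderOf_dvd_iff_pow_eq_one]
lemma count_dvd {p N m : ℕ} [NeZero N] (hpp : 0 < p) (hcop : Nat.Coprime p N)
    (hmdvd : ∀ n, 1 < n → n ∣ N → m ∣ orderOf ((p : ZMod n)))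
    (S : Finset (ZMod N)) (hcl : ∀ x ∈ S, (p : ZMod N) * x ∈ S)
    (h0 : (0 : ZMod N) ∉ S) : m ∣ S.card := by
  induction S using Finset.strongInduction with
  | _ S ih =>
  rcases S.eq_empty_or_nonempty with rfl | ⟨x, hx⟩
  · simp
  · have hu : IsUnit (p : ZMod N) := (ZMod.isUnit_iff_coprime p N).mpr hcop
    have hxne : x ≠ 0 := fun h => h0 (h ▸ hx)
    set n := addOrderOf x with hn
    have hnN : n ∣ N := by
      have := addOrderOf_dvd_card (x := x)
      rwa [ZMod.card] at this
    have hn1 : 1 < n := by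
      have h1 : n ≠ 1 := fun h => hxne (AddMonoid.addOrderOf_eq_one_iff.mp h)
      have h0' : n ≠ 0 := fun h => NeZero.ne N (zero_dvd_iff.mp (h ▸ hnN))
      omega
    haveI : NeZero n := ⟨by omega⟩
    set t := orderOf ((p : ZMod n)) with ht
    have htpos : 0 < t := by
      have hcopn : Nat.Coprime p n := Nat.Coprime.coprime_dvd_right hnN hcop
      have hco : (ZMod.unitOfCoprime p hcopn : ZMod n) = (p : ZMod n) :=
        ZMod.coe_unitOfCoprime p hcopn
      rw [ht, ← hco, orderOf_units]
      exact orderOf_pos _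
    have hmt : m ∣ t := hmdvd n hn1 hnN
    set O : Finset (ZMod N) := (Finset.range t).image (fun j => (p : ZMod N) ^ j * x) with hO
    have hmemS : ∀ j : ℕ, (p : ZMod N) ^ j * x ∈ S := by
      intro j
      induction j with
      | zero => simpa using hx
      | succ j ihj =>
        have := hcl _ ihj
        rwa [← mul_assoc, ← pow_succ'] at this
    have hOS : O ⊆ S := by
      intro y hy
      rw [hO, Finset.mem_image] at hy
      obtain ⟨j, _, rfl⟩ := hy
      exact hmemS j
    have hcancel : ∀ i j : ℕ, i ≤ j → j < t → (p : ZMod N) ^ i * x = (p : ZMod N) ^ j * x →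
        i = j := by
      intro i j hle hjt hij
      have h1 : (p : ZMod N) ^ i * ((p : ZMod N) ^ (j - i) * x) = (p : ZMod N) ^ i * x := by
        rw [← mul_assoc, ← pow_add, Nat.add_sub_cancel' hle]
        exact hij.symm
      have h2 : (p : ZMod N) ^ (j - i) * x = x := (hu.pow i).mul_left_cancel h1
      have h3 : t ∣ j - i := (key_iff hpp x (j - i)).mp h2
      rcases Nat.eq_zero_or_pos (j - i) with h | h
      · omega
      · exact absurd (Nat.le_of_dvd h h3) (by omega)
    have hcardO : O.card = t := by
      rw [hO, Finset.card_image_of_injOn, Finset.card_range]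
      intro i hi j hj hij
      simp only [Finset.mem_coe, Finset.mem_range] at hi hj
      rcases le_total i j with h | h
      · exact hcancel i j h hj hij
      · exact (hcancel j i h hi hij.symm).symm
    have hOcl : ∀ y ∈ O, (p : ZMod N) * y ∈ O := by
      intro y hy
      rw [hO, Finset.mem_image] at hy ⊢
      obtain ⟨j, hj, rfl⟩ := hy
      rw [Finset.mem_range] at hj
      rcases Nat.lt_or_ge (j + 1) t with h | h
      · exact ⟨j + 1, Finset.mem_range.mpr h, by rw [pow_succ']; ring⟩
      · have hjt : j + 1 = t := by omega
        refine ⟨0, Finset.mem_range.mpr htpos, ?_⟩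
        have : (p : ZMod N) ^ t * x = x := (key_iff hpp x t).mpr dvd_rfl
        simp only [pow_zero, one_mul]
        rw [← mul_assoc, ← pow_succ', hjt]
        exact this.symm
    have hO0 : (0 : ZMod N) ∉ O := fun h => h0 (hOS h)
    have hsub : S \ O ⊂ S := by
      apply Finset.sdiff_ssubset hOS
      exact ⟨x, by rw [hO, Finset.mem_image]; exact ⟨0, Finset.mem_range.mpr htpos, by simp⟩⟩
    have hScl : ∀ y ∈ S \ O, (p : ZMod N) * y ∈ S \ O := by
      intro y hy
      rw [Finset.mem_sdiff] at hy ⊢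
      refine ⟨hcl y hy.1, fun hmem => hy.2 ?_⟩
      rw [hO, Finset.mem_image] at hmem ⊢
      obtain ⟨j, hj, hjy⟩ := hmem
      rw [Finset.mem_range] at hj
      rcases Nat.eq_zero_or_pos j with rfl | hjpos
      · refine ⟨t - 1, Finset.mem_range.mpr (by omega), ?_⟩
        simp only [pow_zero, one_mul] at hjy
        have htx : (p : ZMod N) ^ t * x = x := (key_iff hpp x t).mpr dvd_rfl
        have : (p : ZMod N) * ((p : ZMod N) ^ (t - 1) * x) = (p : ZMod N) * y := by
          rw [← mul_assoc, ← pow_succ']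
          have : t - 1 + 1 = t := by omega
          rw [this, htx, hjy]
        exact hu.mul_left_cancel this
      · refine ⟨j - 1, Finset.mem_range.mpr (by omega), ?_⟩
        have : (p : ZMod N) * ((p : ZMod N) ^ (j - 1) * x) = (p : ZMod N) * y := by
          rw [← mul_assoc, ← pow_succ']
          have : j - 1 + 1 = j := by omega
          rw [this, hjy]
        exact hu.mul_left_cancel this
    have hS0 : (0 : ZMod N) ∉ S \ O := fun h => h0 (Finset.mem_sdiff.mp h).1
    have := ih (S \ O) hsub hScl hS0
    have hcards : (S \ O).card + O.card = S.card := Finset.card_sdiff_add_card_eq_card hOS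
    rw [← hcards]
    exact Nat.dvd_add this (hcardO ▸ hmt)

/-- Lemma 3.3 / `le:size`.  If the Gauss periods of order `N` of `F_q`
take exactly `ℓ` distinct values `α₁, …, α_ℓ`, then each index set `I_i` is invariant
under multiplication by `p` on `ℤ_N`; moreover, if
`m = gcd{ord_n(p) : n > 1, n ∣ N} ≥ 2`, there is a unique `i₀` with
`|I_{i₀}| ≡ 1 (mod m)` and `|I_i| ≡ 0 (mod m)` for all `i ≠ i₀`. -/
theorem stmt_8
    (p f N q : ℕ) [Fact p.Prime] (hf : 0 < f) (hq : q = p ^ f)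
    (hN : 1 < N) [NeZero N] (hNq : N ∣ q - 1)
    (F : Type) [Field F] [Fintype F] [Algebra (ZMod p) F]
    (hcard : Fintype.card F = q)
    (γ : F) (hγ : orderOf γ = q - 1)
    (ζ : ℂ) (hζ : IsPrimitiveRoot ζ p)
    (ψ : F → ℂ) (hψ : ∀ x, ψ x = ζ ^ (Algebra.trace (ZMod p) F x).val)
    (η : ℕ → ℂ)
    (hη : ∀ a, η a = ∑ j ∈ Finset.range ((q - 1) / N), ψ (γ ^ (a + N * j)))
    -- the Gauss periods take exactly ℓ distinct values α 0, …, α (ℓ-1)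
    (ℓ : ℕ) (α : Fin ℓ → ℂ) (hαinj : Function.Injective α)
    (hval : {c : ℂ | ∃ a, a < N ∧ η a = c} = Set.range α)
    (I : Fin ℓ → Finset (ZMod N))
    (hI : ∀ i : Fin ℓ, ∀ x : ZMod N, x ∈ I i ↔ η x.val = α i)
    -- m = gcd of the multiplicative orders of p modulo the divisors n > 1 of N
    (m : ℕ)
    (hm : m = Finset.gcd ((Finset.range (N + 1)).filter fun n => 1 < n ∧ n ∣ N)
        fun n => orderOf ((p : ZMod n))) :
    (∀ i : Fin ℓ, ∀ x : ZMod N, x ∈ I i → (p : ZMod N) * x ∈ I i)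
    ∧ (2 ≤ m → ∃! i₀ : Fin ℓ, ((I i₀).card ≡ 1 [MOD m]
        ∧ ∀ i : Fin ℓ, i ≠ i₀ → (I i).card ≡ 0 [MOD m])) := by
  have hpp : p.Prime := Fact.out
  have hq1 : 1 < q := by
    rw [hq]; exact Nat.one_lt_pow hf.ne' hpp.one_lt
  set k := (q - 1) / N with hk
  have hNk : N * k = q - 1 := Nat.mul_div_cancel' hNq
  have hk0 : 0 < k := by
    rcases Nat.eq_zero_or_pos k with h | h
    · rw [h, mul_zero] at hNk; omega
    · exact h
  haveI : NeZero k := ⟨hk0.ne'⟩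
  -- p is coprime to q - 1
  have hpq : ¬ p ∣ q - 1 := by
    intro h
    have h2 : p ∣ q := hq ▸ dvd_pow_self p hf.ne'
    have h3 : p ∣ 1 := by
      have := Nat.dvd_sub h2 h
      rwa [Nat.sub_sub_self hq1.le] at this
    exact hpp.one_lt.ne' (Nat.dvd_one.mp h3)
  have hcopN : Nat.Coprime p N :=
    (hpp.coprime_iff_not_dvd).mpr fun h => hpq (h.trans hNq)
  have hcopk : Nat.Coprime p k :=
    (hpp.coprime_iff_not_dvd).mpr fun h => hpq (h.trans ⟨N, by rw [← hNk, mul_comm]⟩)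
  -- γ powers depend only on exponents mod q - 1
  have hgpow : ∀ a b : ℕ, a ≡ b [MOD q - 1] → γ ^ a = γ ^ b := by
    intro a b h
    rw [← pow_mod_orderOf, hγ, h, ← hγ, pow_mod_orderOf]
  -- η as a sum over ZMod k
  have hsum : ∀ a : ℕ, η a = ∑ x : ZMod k, ψ (γ ^ (a + N * x.val)) := by
    intro a
    rw [hη]
    refine Finset.sum_nbij' (fun j => ((j : ZMod k))) (fun x => x.val)
      (fun j _ => Finset.mem_univ _)
      (fun x _ => Finset.mem_range.mpr (ZMod.val_lt x))
      (fun j hj => ZMod.val_cast_of_lt (Finset.mem_range.mp hj))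
      (fun x _ => ZMod.natCast_rightInverse x)
      (fun j hj => by rw [ZMod.val_cast_of_lt (Finset.mem_range.mp hj)])
  -- η is invariant under shifting the argument by multiples of N
  have hshift : ∀ a d : ℕ, η (a + N * d) = η a := by
    intro a d
    rw [hsum, hsum]
    refine Fintype.sum_equiv (Equiv.addRight ((d : ZMod k))) _ _ ?_
    intro x
    have h1 : (x + (d : ZMod k)).val ≡ x.val + d [MOD k] := by
      rw [ZMod.val_add, ZMod.val_natCast]
      calc (x.val + d % k) % k ≡ x.val + d % k [MOD k] := Nat.mod_modEq _ _
        _ ≡ x.val + d [MOD k] := Nat.ModEq.add_left _ (Nat.mod_modEq d k)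
    have h2 : a + N * d + N * x.val ≡ a + N * ((x + (d : ZMod k)).val) [MOD q - 1] := by
      have h3 := (Nat.ModEq.mul_left' (c := N) h1).add_left a
      rw [hNk] at h3
      have h4 : a + N * (x.val + d) = a + N * d + N * x.val := by ring
      rw [h4] at h3
      exact h3.symm
    simp only [Equiv.coe_addRight]
    rw [hgpow _ _ h2]
  have hperiod : ∀ a : ℕ, η (a % N) = η a := by
    intro a
    have h := hshift (a % N) (a / N)
    rw [Nat.mod_add_div] at h
    exact h.symm
  -- η is invariant under multiplication of the argument by p
  have hfrob : ∀ y : F, ψ (y ^ p) = ψ y := by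
    intro y
    rw [hψ, hψ, trace_frob]
  have hetap : ∀ a : ℕ, η (p * a) = η a := by
    intro a
    rw [hsum, hsum]
    symm
    have hbij : Function.Bijective (((p : ZMod k)) * ·) := by
      have hb := Units.mulLeft_bijective (ZMod.unitOfCoprime p hcopk)
      rwa [ZMod.coe_unitOfCoprime] at hb
    refine Fintype.sum_bijective _ hbij _ _ ?_
    intro x
    have h1 : ((p : ZMod k) * x).val ≡ p * x.val [MOD k] := by
      rw [ZMod.val_mul, ZMod.val_natCast]
      calc ((p % k) * x.val) % k ≡ (p % k) * x.val [MOD k] := Nat.mod_modEq _ _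
        _ ≡ p * x.val [MOD k] := Nat.ModEq.mul_right _ (Nat.mod_modEq p k)
    have h2 : (a + N * x.val) * p ≡ p * a + N * (((p : ZMod k) * x).val) [MOD q - 1] := by
      have h3 := (Nat.ModEq.mul_left' (c := N) h1).add_left (p * a)
      rw [hNk] at h3
      have h4 : p * a + N * (p * x.val) = (a + N * x.val) * p := by ring
      rw [h4] at h3
      exact h3.symm
    calc ψ (γ ^ (a + N * x.val)) = ψ ((γ ^ (a + N * x.val)) ^ p) := (hfrob _).symm
      _ = ψ (γ ^ ((a + N * x.val) * p)) := by rw [← pow_mul]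
      _ = ψ (γ ^ (p * a + N * (((p : ZMod k) * x).val))) := by rw [hgpow _ _ h2]
  -- Part 1
  have part1 : ∀ i : Fin ℓ, ∀ x : ZMod N, x ∈ I i → (p : ZMod N) * x ∈ I i := by
    intro i x hx
    rw [hI] at hx ⊢
    have hvx : ((p : ZMod N) * x).val = (p * x.val) % N := by
      have h5 : (p : ZMod N) * x = ((p * x.val : ℕ) : ZMod N) := by
        push_cast
        rw [ZMod.natCast_rightInverse x]
      rw [h5, ZMod.val_natCast]
    rw [hvx, hperiod, hetap]
    exact hx
  refine ⟨part1, ?_⟩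
  intro hm2
  -- every element belongs to exactly one I i
  have hpart : ∀ x : ZMod N, ∃! i : Fin ℓ, x ∈ I i := by
    intro x
    have hmem : η x.val ∈ {c : ℂ | ∃ a, a < N ∧ η a = c} :=
      ⟨x.val, ZMod.val_lt x, rfl⟩
    rw [hval] at hmem
    obtain ⟨i, hi⟩ := hmem
    refine ⟨i, (hI i x).mpr hi.symm, ?_⟩
    intro j hj
    exact (hαinj (hi.trans ((hI j x).mp hj))).symm
  obtain ⟨i₀, hi₀, hi₀uniq⟩ := hpart 0
  have hmdvd : ∀ n, 1 < n → n ∣ N → m ∣ orderOf ((p : ZMod n)) := by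
    intro n h1n hnN
    rw [hm]
    refine Finset.gcd_dvd ?_
    rw [Finset.mem_filter, Finset.mem_range]
    exact ⟨by have := Nat.le_of_dvd (by omega) hnN; omega, h1n, hnN⟩
  -- I i for i ≠ i₀ has cardinality ≡ 0
  have hzero : ∀ i : Fin ℓ, i ≠ i₀ → (I i).card ≡ 0 [MOD m] := by
    intro i hi
    have h0 : (0 : ZMod N) ∉ I i := fun h => hi (hi₀uniq i h)
    have := count_dvd hpp.pos hcopN hmdvd (I i) (fun x hx => part1 i x hx) h0
    exact (Nat.modEq_zero_iff_dvd).mpr this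
  -- I i₀ has cardinality ≡ 1
  have hone : (I i₀).card ≡ 1 [MOD m] := by
    set S := (I i₀).erase 0 with hS
    have hScl : ∀ x ∈ S, (p : ZMod N) * x ∈ S := by
      intro x hx
      rw [hS, Finset.mem_erase] at hx ⊢
      refine ⟨?_, part1 i₀ x hx.2⟩
      intro h
      have hu : IsUnit (p : ZMod N) := (ZMod.isUnit_iff_coprime p N).mpr hcopN
      exact hx.1 (by
        have := hu.mul_left_cancel (h.trans (mul_zero (p : ZMod N)).symm)
        exact this)
    have hS0 : (0 : ZMod N) ∉ S := Finset.notMem_erase _ _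
    have hdvd := count_dvd hpp.pos hcopN hmdvd S hScl hS0
    have hcard : (I i₀).card = S.card + 1 := by
      rw [hS, Finset.card_erase_of_mem hi₀]
      have : 0 < (I i₀).card := Finset.card_pos.mpr ⟨0, hi₀⟩
      omega
    rw [hcard]
    calc S.card + 1 ≡ 0 + 1 [MOD m] :=
          Nat.ModEq.add_right 1 ((Nat.modEq_zero_iff_dvd).mpr hdvd)
      _ = 1 := by omega
  refine ⟨i₀, ⟨hone, hzero⟩, ?_⟩
  rintro i₁ ⟨h1, h2⟩
  by_contra hne
  have hz := h2 i₀ (fun h => hne h.symm)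
  have hcontra : (1 : ℕ) ≡ 0 [MOD m] := hone.symm.trans hz
  have h10 : 1 % m = 0 % m := hcontra
  rw [Nat.zero_mod, Nat.one_mod_eq_one.mpr (by omega)] at h10
  exact one_ne_zero h10
end

section
/- Let q be a prime power with q ≡ 1 (mod 3), let γ be an element of order k = 3(q−1) in F_{q^3}^*, and assume the multiplicative order of q modulo k equals 3. Set N = (q³−1)/k, so that C₀ = ⟨γ⟩ is the subgroup of index N of F_{q^3}^*, and C₀ = F_q^*·1 ∪ F_q^*·γ ∪ F_q^*·γ². Then the Gauss periods of order N of F_{q^3} take exactly the three values α₁ = −3, α₂ = q − 3, α₃ = 2q − 3 (an arithmetic progression with common difference q), and the multiplicities are |I₁| = (q−1)²/3, |I₂| = q − 1, |I₃| = 1, where I_i is the set of a ∈ ℤ_N for which the Gauss period η_a equals α_i. -/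
open scoped BigOperators

private lemma helper_sum_mul {M : Type*} [AddCommMonoid M] (n k : ℕ) (hn : 0 < n) (f : ℕ → M) :
    ∑ t ∈ Finset.range (n * k), f t
      = ∑ a ∈ Finset.range n, ∑ j ∈ Finset.range k, f (a + n * j) := by
  rw [← Finset.sum_product']
  refine Finset.sum_nbij' (fun t => (t % n, t / n)) (fun z => z.1 + n * z.2) ?_ ?_ ?_ ?_ ?_
  · intro t ht
    rw [Finset.mem_range] at ht
    rw [Finset.mem_product, Finset.mem_range, Finset.mem_range]
    exact ⟨Nat.mod_lt _ hn, (Nat.div_lt_iff_lt_mul hn).2 (by rwa [mul_comm k n])⟩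
  · intro z hz
    rw [Finset.mem_product, Finset.mem_range, Finset.mem_range] at hz
    rw [Finset.mem_range]
    calc z.1 + n * z.2 < n + n * z.2 := by omega
      _ = n * (z.2 + 1) := by ring
      _ ≤ n * k := Nat.mul_le_mul_left n hz.2
  · intro t _; exact Nat.mod_add_div t n
  · intro z hz
    rw [Finset.mem_product, Finset.mem_range, Finset.mem_range] at hz
    have h1 : (z.1 + n * z.2) % n = z.1 := by
      rw [Nat.add_mul_mod_self_left, Nat.mod_eq_of_lt hz.1]
    have h2 : (z.1 + n * z.2) / n = z.2 := by
      rw [Nat.add_mul_div_left _ _ hn, Nat.div_eq_of_lt hz.1, zero_add]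
    exact Prod.ext h1 h2
  · intro t _; rw [Nat.mod_add_div t n]

private lemma helper_shift {M : Type*} [AddCommGroup M] (k : ℕ) (f : ℕ → M)
    (hf : ∀ n, f (n + k) = f n) (j : ℕ) :
    ∑ s ∈ Finset.range k, f (j + s) = ∑ s ∈ Finset.range k, f s := by
  induction j with
  | zero => simp
  | succ j ih =>
    rw [← ih]
    have h1 : ∑ s ∈ Finset.range (k + 1), f (j + s)
        = ∑ s ∈ Finset.range k, f (j + (s + 1)) + f (j + 0) :=
      Finset.sum_range_succ' (fun s => f (j + s)) k
    have h2 : ∑ s ∈ Finset.range (k + 1), f (j + s)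
        = ∑ s ∈ Finset.range k, f (j + s) + f (j + k) :=
      Finset.sum_range_succ (fun s => f (j + s)) k
    have h3 : f (j + k) = f (j + 0) := by rw [add_zero, hf]
    have h4 : ∑ s ∈ Finset.range k, f (j + (s + 1)) = ∑ s ∈ Finset.range k, f (j + 1 + s) := by
      refine Finset.sum_congr rfl fun s _ => ?_
      congr 1; omega
    have := h1.symm.trans h2
    rw [h3] at this
    have h5 : ∑ s ∈ Finset.range k, f (j + (s + 1)) = ∑ s ∈ Finset.range k, f (j + s) :=
      add_right_cancel this
    rw [← h4, h5]

private lemma aux_nondeg (p : ℕ) [Fact p.Prime] (E : Type) [Field E] [Fintype E]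
    [Algebra (ZMod p) E] (hring : ringChar E = p) {a : E} (ha : a ≠ 0) :
    ∃ b, Algebra.trace (ZMod p) E (a * b) ≠ 0 := by
  subst hring
  exact FiniteField.trace_to_zmod_nondegenerate E ha

/-- Subsection 4.3, examples from a union of 1-dimensional
subspaces.  Let `q ≡ 1 (mod 3)` be a prime power, `k = 3(q-1)`, `N = (q³-1)/k`, and
assume `ord_k(q) = 3`.  Then the Gauss periods of order `N` of `F_{q³}` take exactly
the three values `-3, q-3, 2q-3` (an arithmetic progression with common difference
`q`), with multiplicities `|I₁| = (q-1)²/3`, `|I₂| = q-1`, `|I₃| = 1`. -/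
theorem stmt_16
    (p m q k N : ℕ) [Fact p.Prime] (hm : 0 < m) (hq : q = p ^ m)
    (hq3 : q % 3 = 1) (hk : k = 3 * (q - 1)) (hN : N = (q ^ 3 - 1) / k)
    [NeZero N] [NeZero k]
    -- the multiplicative order of q modulo k equals 3
    (hord : orderOf ((q : ZMod k)) = 3)
    (E : Type) [Field E] [Fintype E] [Algebra (ZMod p) E]
    (hcard : Fintype.card E = q ^ 3)
    (γ' : E) (hγ' : orderOf γ' = q ^ 3 - 1)
    -- γ = γ'^N generates the subgroup C₀ of order k = 3(q-1)
    (γ : E) (hγ : γ = γ' ^ N)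
    (ζ : ℂ) (hζ : IsPrimitiveRoot ζ p)
    (ψ : E → ℂ) (hψ : ∀ x, ψ x = ζ ^ (Algebra.trace (ZMod p) E x).val)
    (η : ℕ → ℂ)
    (hη : ∀ a, η a = ∑ j ∈ Finset.range k, ψ (γ' ^ (a + N * j)))
    (I₁ I₂ I₃ : Finset (ZMod N))
    (hI₁ : ∀ x : ZMod N, x ∈ I₁ ↔ η x.val = (-3 : ℂ))
    (hI₂ : ∀ x : ZMod N, x ∈ I₂ ↔ η x.val = (q : ℂ) - 3)
    (hI₃ : ∀ x : ZMod N, x ∈ I₃ ↔ η x.val = 2 * (q : ℂ) - 3) :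
    -- exactly the three values -3, q-3, 2q-3
    ({c : ℂ | ∃ a, a < N ∧ η a = c} = {(-3 : ℂ), (q : ℂ) - 3, 2 * (q : ℂ) - 3})
    -- multiplicities
    ∧ (I₁.card : ℚ) = ((q : ℚ) - 1) ^ 2 / 3
    ∧ (I₂.card : ℚ) = (q : ℚ) - 1
    ∧ I₃.card = 1 := by
  classical
  have hp : p.Prime := Fact.out
  haveI : NeZero p := ⟨hp.ne_zero⟩
  -- basic arithmetic
  have hq2 : 2 ≤ q := by
    rw [hq]
    exact hp.two_le.trans (Nat.le_self_pow hm.ne' p)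
  have hq4 : 4 ≤ q := by omega
  have hqt : ∃ t, q = 3 * t + 1 := ⟨q / 3, by omega⟩
  obtain ⟨t, hqt⟩ := hqt
  have ht1 : 1 ≤ t := by omega
  have e1 : q ^ 3 = 9 * t * (3 * t * t + 3 * t + 1) + 1 := by rw [hqt]; ring
  have hN1 : q ^ 3 - 1 = 9 * t * (3 * t * t + 3 * t + 1) := Nat.sub_eq_of_eq_add e1
  have hkq : k = 9 * t := by omega
  have hNt : N = 3 * t * t + 3 * t + 1 := by
    rw [hN, hN1, hkq, Nat.mul_div_cancel_left _ (by omega : 0 < 9 * t)]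
  have hkN : k * N = q ^ 3 - 1 := by rw [hNt, hkq, hN1]
  have h3N : 3 * N = q * q + q + 1 := by rw [hNt, hqt]; ring
  have hNpos : 0 < N := by omega
  have hkpos : 0 < k := by omega
  have hk9 : 9 ≤ k := by omega
  have hq31 : 0 < q ^ 3 - 1 := by rw [← hkN]; positivity
  -- characteristic
  haveI hCharP : CharP E p := charP_of_injective_algebraMap (algebraMap (ZMod p) E).injective p
  have hring : ringChar E = p := ringChar.eq E p
  -- γ' basics
  have hγ'ne : γ' ≠ 0 := by
    intro h
    have h1 := pow_orderOf_eq_one γ'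
    rw [hγ', h, zero_pow (by omega : q ^ 3 - 1 ≠ 0)] at h1
    exact zero_ne_one h1
  have hpow_inj : ∀ s < q ^ 3 - 1, ∀ s' < q ^ 3 - 1, γ' ^ s = γ' ^ s' → s = s' := by
    intro s hs s' hs' hss
    exact pow_injOn_Iio_orderOf (by rw [hγ']; exact hs) (by rw [hγ']; exact hs') hss
  have himg : (Finset.range (q ^ 3 - 1)).image (γ' ^ ·) = Finset.univ.erase 0 := by
    apply Finset.eq_of_subset_of_card_le
    · intro x hx
      rw [Finset.mem_image] at hx
      obtain ⟨s, _, rfl⟩ := hx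
      exact Finset.mem_erase.2 ⟨pow_ne_zero s hγ'ne, Finset.mem_univ _⟩
    · rw [Finset.card_erase_of_mem (Finset.mem_univ 0), Finset.card_univ, hcard,
        Finset.card_image_of_injOn, Finset.card_range]
      intro s hs s' hs' hss
      exact hpow_inj s (Finset.mem_range.1 (Finset.mem_coe.1 hs)) s'
        (Finset.mem_range.1 (Finset.mem_coe.1 hs')) hss
  have hsurj : ∀ x : E, x ≠ 0 → ∃ s, s < q ^ 3 - 1 ∧ γ' ^ s = x := by
    intro x hx
    have : x ∈ Finset.univ.erase 0 := Finset.mem_erase.2 ⟨hx, Finset.mem_univ _⟩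
    rw [← himg, Finset.mem_image] at this
    obtain ⟨s, hs, hsx⟩ := this
    exact ⟨s, Finset.mem_range.1 hs, hsx⟩
  -- γ basics
  have hγk : orderOf γ = k := by
    rw [hγ, orderOf_pow' γ' hNpos.ne', hγ', Nat.gcd_eq_right ⟨k, by rw [← hkN, mul_comm]⟩, ← hkN,
      Nat.mul_div_cancel _ hNpos]
  have hγk1 : γ ^ k = 1 := by rw [← hγk]; exact pow_orderOf_eq_one γ
  have hγne : γ ≠ 0 := by
    intro h
    rw [h, zero_pow hkpos.ne'] at hγk1
    exact zero_ne_one hγk1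
  have hγinj : ∀ s < k, ∀ s' < k, γ ^ s = γ ^ s' → s = s' := by
    intro s hs s' hs' hss
    exact pow_injOn_Iio_orderOf (by rw [hγk]; exact hs) (by rw [hγk]; exact hs') hss
  have hgord : orderOf (γ ^ 3) = q - 1 := by
    rw [orderOf_pow' γ (by norm_num), hγk, Nat.gcd_eq_right ⟨3 * t, by omega⟩]
    omega
  -- the subfield F_q, as a finset
  set Fs : Finset E := Finset.univ.filter (fun x : E => x ^ q = x) with hFs_def
  have hFs_mem : ∀ x : E, x ∈ Fs ↔ x ^ q = x := by
    intro x; rw [hFs_def, Finset.mem_filter]; simp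
  have hfrob : ∀ x y : E, (x + y) ^ q = x ^ q + y ^ q := by
    intro x y; rw [hq]; exact add_pow_char_pow x y p m
  have hF0 : (0 : E) ∈ Fs := by rw [hFs_mem]; exact zero_pow (by omega)
  have hF1 : (1 : E) ∈ Fs := by rw [hFs_mem]; exact one_pow q
  have hFadd : ∀ x ∈ Fs, ∀ y ∈ Fs, x + y ∈ Fs := by
    intro x hx y hy
    rw [hFs_mem] at hx hy ⊢
    rw [hfrob, hx, hy]
  have hFneg : ∀ x ∈ Fs, -x ∈ Fs := by
    intro x hx
    rw [hFs_mem] at hx ⊢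
    have h0 : (0 : E) ^ q = 0 := zero_pow (by omega)
    have h5 := hfrob x (-x)
    rw [add_neg_cancel, h0, hx] at h5
    linear_combination -h5
  have hFsub : ∀ x ∈ Fs, ∀ y ∈ Fs, x - y ∈ Fs := by
    intro x hx y hy
    rw [sub_eq_add_neg]
    exact hFadd x hx _ (hFneg y hy)
  have hFmul : ∀ x ∈ Fs, ∀ y ∈ Fs, x * y ∈ Fs := by
    intro x hx y hy
    rw [hFs_mem] at hx hy ⊢
    rw [mul_pow, hx, hy]
  have hFinv : ∀ x ∈ Fs, x⁻¹ ∈ Fs := by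
    intro x hx
    rw [hFs_mem] at hx ⊢
    rw [inv_pow, hx]
  have hFdiv : ∀ x ∈ Fs, ∀ y ∈ Fs, x / y ∈ Fs := by
    intro x hx y hy
    rw [div_eq_mul_inv]
    exact hFmul x hx _ (hFinv y hy)
  have hg_mem : ∀ s : ℕ, (γ ^ 3) ^ s ∈ Fs := by
    intro s
    rw [hFs_mem]
    have h1 : ((γ ^ 3) ^ s) ^ q = ((γ ^ 3) ^ s) ^ (q - 1) * ((γ ^ 3) ^ s) := by
      rw [← pow_succ]
      congr 1
      omega
    have h2 : ((γ ^ 3) ^ s) ^ (q - 1) = (γ ^ k) ^ s := by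
      rw [← pow_mul, ← pow_mul, hk, ← pow_mul]
      congr 1
      ring
    rw [h1, h2, hγk1, one_pow, one_mul]
  have hγnF : γ ∉ Fs := by
    intro h
    rw [hFs_mem] at h
    have h1 : γ ^ (q - 1) * γ = γ := by
      rw [← pow_succ]
      have : q - 1 + 1 = q := by omega
      rw [this, h]
    have h2 : γ ^ (q - 1) = 1 :=
      mul_right_cancel₀ hγne (by rw [one_mul]; exact h1)
    have h3 := orderOf_dvd_of_pow_eq_one h2
    rw [hγk] at h3
    have := Nat.le_of_dvd (by omega) h3
    omega
  have hFeq : Fs = insert (0 : E) ((Finset.range (q - 1)).image ((γ ^ 3) ^ ·)) := by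
    ext x
    rw [hFs_mem, Finset.mem_insert, Finset.mem_image]
    constructor
    · intro hx
      by_cases hx0 : x = 0
      · exact Or.inl hx0
      · right
        have h2 : x ^ (q - 1) = 1 := by
          have h1 : x ^ (q - 1) * x = x := by
            rw [← pow_succ]
            have : q - 1 + 1 = q := by omega
            rw [this, hx]
          exact mul_right_cancel₀ hx0 (by rw [one_mul]; exact h1)
        obtain ⟨s, hs, rfl⟩ := hsurj x hx0
        have h3 : γ' ^ (s * (q - 1)) = 1 := by rw [pow_mul, h2]
        have h4 : (q ^ 3 - 1) ∣ s * (q - 1) := by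
          rw [← hγ']
          exact orderOf_dvd_of_pow_eq_one h3
        have h5 : (3 * N) ∣ s := by
          have hfact : q ^ 3 - 1 = (q - 1) * (3 * N) := by rw [← hkN, hk]; ring
          rw [hfact, mul_comm s (q - 1)] at h4
          exact (Nat.mul_dvd_mul_iff_left (by omega : 0 < q - 1)).1 h4
        obtain ⟨u, hu⟩ := h5
        refine ⟨u % (q - 1), Finset.mem_range.2 (Nat.mod_lt _ (by omega)), ?_⟩
        have h6 : (γ ^ 3) ^ (u % (q - 1)) = (γ ^ 3) ^ u := by
          rw [← hgord]; exact pow_mod_orderOf _ _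
        rw [h6, hu, hγ]
        rw [← pow_mul, ← pow_mul]
        congr 1
        ring
    · rintro (rfl | ⟨s, _, rfl⟩)
      · exact zero_pow (by omega)
      · have := hg_mem s
        rwa [hFs_mem] at this
  have h0nmem : (0 : E) ∉ (Finset.range (q - 1)).image ((γ ^ 3) ^ ·) := by
    rw [Finset.mem_image]
    rintro ⟨s, _, hs⟩
    exact pow_ne_zero s (pow_ne_zero 3 hγne) hs
  have hginj : ∀ s < q - 1, ∀ s' < q - 1, (γ ^ 3) ^ s = (γ ^ 3) ^ s' → s = s' := by
    intro s hs s' hs' hss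
    exact pow_injOn_Iio_orderOf (by rw [hgord]; exact hs) (by rw [hgord]; exact hs') hss
  have hFcard : Fs.card = q := by
    rw [hFeq, Finset.card_insert_of_notMem h0nmem, Finset.card_image_of_injOn, Finset.card_range]
    · omega
    · intro s hs s' hs' hss
      exact hginj s (Finset.mem_range.1 (Finset.mem_coe.1 hs)) s'
        (Finset.mem_range.1 (Finset.mem_coe.1 hs')) hss
  -- no linear relation between 1 and γ over F
  have hlin : ∀ a ∈ Fs, ∀ b ∈ Fs, a + b * γ = 0 → a = 0 ∧ b = 0 := by
    intro a ha b hb hab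
    by_cases hb0 : b = 0
    · subst hb0
      constructor
      · linear_combination hab
      · rfl
    · exfalso
      apply hγnF
      have : γ = -(a / b) := by
        field_simp
        linear_combination hab
      rw [this]
      exact hFneg _ (hFdiv a ha b hb)
  -- q*q - 1 arithmetic
  have hqq : q * q - 1 = (q - 1) * (q + 1) := by
    have : q * q = (q - 1) * (q + 1) + 1 := by
      rw [show q - 1 = 3 * t from by omega, hqt]; ring
    omega
  -- no quadratic relation
  have hindep : ∀ a ∈ Fs, ∀ b ∈ Fs, ∀ c ∈ Fs, a + b * γ + c * γ ^ 2 = 0 →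
      a = 0 ∧ b = 0 ∧ c = 0 := by
    intro a ha b hb c hc habc
    by_cases hc0 : c = 0
    · subst hc0
      have h1 : a + b * γ = 0 := by linear_combination habc
      obtain ⟨h2, h3⟩ := hlin a ha b hb h1
      exact ⟨h2, h3, rfl⟩
    · exfalso
      set α := -(a / c) with hα_def
      set β := -(b / c) with hβ_def
      have hαF : α ∈ Fs := hFneg _ (hFdiv a ha c hc)
      have hβF : β ∈ Fs := hFneg _ (hFdiv b hb c hc)
      have hγ2 : γ ^ 2 = α + β * γ := by
        have h6 : c * γ ^ 2 = c * (α + β * γ) := by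
          rw [hα_def, hβ_def]
          have e1 : c * (-(a / c) + -(b / c) * γ) = -a + -b * γ := by
            field_simp
          rw [e1]
          linear_combination habc
        exact mul_left_cancel₀ hc0 h6
      -- the subfield F_q(γ) = F_q + F_q γ
      set Vc : Set E := {x | ∃ a' ∈ Fs, ∃ b' ∈ Fs, x = a' + b' * γ} with hVc_def
      have hVc0 : (0 : E) ∈ Vc := ⟨0, hF0, 0, hF0, by ring⟩
      have hVc1 : (1 : E) ∈ Vc := ⟨1, hF1, 0, hF0, by ring⟩
      have hVcadd : ∀ {x y : E}, x ∈ Vc → y ∈ Vc → x + y ∈ Vc := by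
        rintro x y ⟨a1, ha1, b1, hb1, rfl⟩ ⟨a2, ha2, b2, hb2, rfl⟩
        exact ⟨a1 + a2, hFadd _ ha1 _ ha2, b1 + b2, hFadd _ hb1 _ hb2, by ring⟩
      have hVcneg : ∀ {x : E}, x ∈ Vc → -x ∈ Vc := by
        rintro x ⟨a1, ha1, b1, hb1, rfl⟩
        exact ⟨-a1, hFneg _ ha1, -b1, hFneg _ hb1, by ring⟩
      have hVcmul : ∀ {x y : E}, x ∈ Vc → y ∈ Vc → x * y ∈ Vc := by
        rintro x y ⟨a1, ha1, b1, hb1, rfl⟩ ⟨a2, ha2, b2, hb2, rfl⟩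
        refine ⟨a1 * a2 + b1 * b2 * α, ?_, a1 * b2 + a2 * b1 + b1 * b2 * β, ?_, ?_⟩
        · exact hFadd _ (hFmul _ ha1 _ ha2) _ (hFmul _ (hFmul _ hb1 _ hb2) _ hαF)
        · exact hFadd _ (hFadd _ (hFmul _ ha1 _ hb2) _ (hFmul _ ha2 _ hb1)) _
            (hFmul _ (hFmul _ hb1 _ hb2) _ hβF)
        · linear_combination (b1 * b2) * hγ2
      have hVcpow : ∀ {x : E}, x ∈ Vc → ∀ n : ℕ, x ^ n ∈ Vc := by
        intro x hx n
        induction n with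
        | zero => simpa using hVc1
        | succ n ih => rw [pow_succ]; exact hVcmul ih hx
      have hVcinv : ∀ {x : E}, x ∈ Vc → x⁻¹ ∈ Vc := by
        intro x hx
        by_cases hx0 : x = 0
        · subst hx0; rw [inv_zero]; exact hVc0
        · have h1 : x ^ (q ^ 3 - 1) = 1 := by
            rw [← hcard]; exact FiniteField.pow_card_sub_one_eq_one x hx0
          have h2 : x⁻¹ = x ^ (q ^ 3 - 1 - 1) := by
            refine inv_eq_of_mul_eq_one_right ?_
            rw [← pow_succ']
            have e2 : q ^ 3 - 1 - 1 + 1 = q ^ 3 - 1 := by omega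
            rw [e2, h1]
          rw [h2]
          exact hVcpow hx _
      set V : Subfield E :=
        { carrier := Vc, one_mem' := hVc1, zero_mem' := hVc0,
          mul_mem' := hVcmul, add_mem' := hVcadd, neg_mem' := hVcneg,
          inv_mem' := fun x hx => hVcinv hx } with hV_def
      have hγV : γ ∈ V := ⟨0, hF0, 1, hF1, by ring⟩
      letI : Fintype V := Fintype.ofFinite V
      -- card of V
      set VF : Finset E := (Fs ×ˢ Fs).image (fun z => z.1 + z.2 * γ) with hVF_def
      have hVFinj : Set.InjOn (fun z : E × E => z.1 + z.2 * γ) ↑(Fs ×ˢ Fs) := by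
        intro z hz w hw hzw
        rw [Finset.mem_coe, Finset.mem_product] at hz hw
        simp only at hzw
        have h1 : (z.1 - w.1) + (z.2 - w.2) * γ = 0 := by linear_combination hzw
        obtain ⟨h2, h3⟩ := hlin _ (hFsub _ hz.1 _ hw.1) _ (hFsub _ hz.2 _ hw.2) h1
        have := sub_eq_zero.1 h2
        have := sub_eq_zero.1 h3
        exact Prod.ext (sub_eq_zero.1 h2) (sub_eq_zero.1 h3)
      have hVFcard : VF.card = q * q := by
        rw [hVF_def, Finset.card_image_of_injOn hVFinj, Finset.card_product, hFcard]
      have hVmem : ∀ x : E, x ∈ V ↔ x ∈ VF := by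
        intro x
        rw [hVF_def, Finset.mem_image]
        constructor
        · rintro ⟨a', ha', b', hb', rfl⟩
          exact ⟨(a', b'), Finset.mem_product.2 ⟨ha', hb'⟩, rfl⟩
        · rintro ⟨z, hz, rfl⟩
          rw [Finset.mem_product] at hz
          exact ⟨z.1, hz.1, z.2, hz.2, rfl⟩
      have hVcard : Fintype.card V = q * q := by
        rw [← hVFcard, ← Fintype.card_coe VF]
        exact Fintype.card_congr (Equiv.subtypeEquivRight hVmem)
      -- Lagrange in V
      have hγVne : (⟨γ, hγV⟩ : V) ≠ 0 := by
        intro h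
        apply hγne
        exact congrArg Subtype.val h
      have h1 : (⟨γ, hγV⟩ : V) ^ (Fintype.card V - 1) = 1 :=
        FiniteField.pow_card_sub_one_eq_one _ hγVne
      have h2 : γ ^ (q * q - 1) = 1 := by
        rw [hVcard] at h1
        have := congrArg (Subtype.val : V → E) h1
        push_cast at this
        exact_mod_cast this
      have h3 : k ∣ q * q - 1 := by rw [← hγk]; exact orderOf_dvd_of_pow_eq_one h2
      rw [hqq, hk] at h3
      have h4 : 3 ∣ q + 1 := by
        rw [mul_comm 3 (q-1)] at h3
        exact (Nat.mul_dvd_mul_iff_left (by omega : 0 < q - 1)).1 h3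
      omega
  -- 1, γ, γ² span E over F
  have hspan : ∀ z : E, ∃ a ∈ Fs, ∃ b ∈ Fs, ∃ c ∈ Fs, z = a + b * γ + c * γ ^ 2 := by
    set WF : Finset E := ((Fs ×ˢ Fs) ×ˢ Fs).image
      (fun z => z.1.1 + z.1.2 * γ + z.2 * γ ^ 2) with hWF_def
    have hWFinj : Set.InjOn (fun z : (E × E) × E => z.1.1 + z.1.2 * γ + z.2 * γ ^ 2)
        ↑((Fs ×ˢ Fs) ×ˢ Fs) := by
      intro z hz w hw hzw
      rw [Finset.mem_coe, Finset.mem_product] at hz hw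
      rw [Finset.mem_product] at hz hw
      simp only at hzw
      have h1 : (z.1.1 - w.1.1) + (z.1.2 - w.1.2) * γ + (z.2 - w.2) * γ ^ 2 = 0 := by
        linear_combination hzw
      obtain ⟨h2, h3, h4⟩ := hindep _ (hFsub _ hz.1.1 _ hw.1.1) _ (hFsub _ hz.1.2 _ hw.1.2)
        _ (hFsub _ hz.2 _ hw.2) h1
      exact Prod.ext (Prod.ext (sub_eq_zero.1 h2) (sub_eq_zero.1 h3)) (sub_eq_zero.1 h4)
    have hWFcard : WF.card = q ^ 3 := by
      rw [hWF_def, Finset.card_image_of_injOn hWFinj, Finset.card_product,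
        Finset.card_product, hFcard]
      ring
    have hWFuniv : WF = Finset.univ := Finset.eq_univ_of_card WF (by rw [hWFcard, hcard])
    intro z
    have hz : z ∈ WF := by rw [hWFuniv]; exact Finset.mem_univ z
    rw [hWF_def, Finset.mem_image] at hz
    obtain ⟨w, hw, rfl⟩ := hz
    rw [Finset.mem_product] at hw
    have hw1 := hw.1
    rw [Finset.mem_product] at hw1
    exact ⟨w.1.1, hw1.1, w.1.2, hw1.2, w.2, hw.2, rfl⟩
  -- character lemmas
  have hζp : ζ ^ p = 1 := hζ.pow_eq_one
  have hζmod : ∀ n : ℕ, ζ ^ (n % p) = ζ ^ n := by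
    intro n
    conv_rhs => rw [← Nat.mod_add_div n p]
    rw [pow_add, pow_mul, hζp, one_pow, mul_one]
  have hψ0 : ψ 0 = 1 := by
    rw [hψ, map_zero, ZMod.val_zero, pow_zero]
  have hψadd : ∀ x y : E, ψ (x + y) = ψ x * ψ y := by
    intro x y
    rw [hψ, hψ, hψ, map_add, ZMod.val_add, hζmod, pow_add]
  have hψn1 : ∀ x : E, Algebra.trace (ZMod p) E x ≠ 0 → ψ x ≠ 1 := by
    intro x hx
    rw [hψ]
    refine hζ.pow_ne_one_of_pos_of_lt ?_ (ZMod.val_lt _)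
    have : (Algebra.trace (ZMod p) E x).val ≠ 0 := fun h => hx ((ZMod.val_eq_zero _).1 h)
    omega
  have hnd : ∀ y : E, y ≠ 0 → ∃ b, Algebra.trace (ZMod p) E (y * b) ≠ 0 := fun y hy =>
    aux_nondeg p E hring hy
  -- line sums
  have hline : ∀ y : E, ∑ c ∈ Fs, ψ (c * y)
      = if (∀ c ∈ Fs, Algebra.trace (ZMod p) E (c * y) = 0) then (q : ℂ) else 0 := by
    intro y
    split_ifs with hcond
    · have h1 : ∀ c ∈ Fs, ψ (c * y) = 1 := by
        intro c hc
        rw [hψ, hcond c hc, ZMod.val_zero, pow_zero]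
      rw [Finset.sum_congr rfl h1, Finset.sum_const, hFcard, nsmul_eq_mul, mul_one]
    · push_neg at hcond
      obtain ⟨c₀, hc₀F, hc₀⟩ := hcond
      have hshift : ∑ c ∈ Fs, ψ (c * y) = ∑ c ∈ Fs, ψ ((c + c₀) * y) := by
        refine Finset.sum_nbij' (fun c => c - c₀) (fun c => c + c₀) ?_ ?_ ?_ ?_ ?_
        · intro c hc; exact hFsub _ hc _ hc₀F
        · intro c hc; exact hFadd _ hc _ hc₀F
        · intro c _; ring
        · intro c _; ring
        · intro c _; congr 1; ring
      have h2 : ∑ c ∈ Fs, ψ ((c + c₀) * y) = ψ (c₀ * y) * ∑ c ∈ Fs, ψ (c * y) := by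
        rw [Finset.mul_sum]
        refine Finset.sum_congr rfl fun c _ => ?_
        rw [show (c + c₀) * y = c * y + c₀ * y by ring, hψadd, mul_comm]
      have h3 : (ψ (c₀ * y) - 1) * ∑ c ∈ Fs, ψ (c * y) = 0 := by
        rw [sub_mul, one_mul, ← h2, ← hshift, sub_self]
      rcases mul_eq_zero.1 h3 with h4 | h4
      · exact absurd (by linear_combination h4) (hψn1 _ hc₀)
      · exact h4
  -- full sum
  have hsumE : ∑ x : E, ψ x = 0 := by
    obtain ⟨b, hb⟩ := hnd 1 one_ne_zero
    rw [one_mul] at hb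
    have hshift : ∑ x : E, ψ x = ∑ x : E, ψ (x + b) :=
      Fintype.sum_bijective (fun x : E => x - b) (by
        constructor
        · intro u v huv; simpa using sub_left_injective huv
        · intro u; exact ⟨u + b, by ring⟩) _ _ (fun x => by congr 1; ring)
    have h2 : ∑ x : E, ψ (x + b) = ψ b * ∑ x : E, ψ x := by
      rw [Finset.mul_sum]
      exact Finset.sum_congr rfl fun x _ => by rw [hψadd, mul_comm]
    have h3 : (ψ b - 1) * ∑ x : E, ψ x = 0 := by
      rw [sub_mul, one_mul, ← h2, ← hshift, sub_self]
    rcases mul_eq_zero.1 h3 with h4 | h4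
    · exact absurd (by linear_combination h4) (hψn1 _ hb)
    · exact h4
  -- sum over nonzero elements
  have hstar : ∀ z : E, z ≠ 0 → ∑ s ∈ Finset.range (q ^ 3 - 1), ψ (γ' ^ s * z) = -1 := by
    intro z hz
    have h1 : ∑ s ∈ Finset.range (q ^ 3 - 1), ψ (γ' ^ s * z)
        = ∑ x ∈ (Finset.range (q ^ 3 - 1)).image (γ' ^ ·), ψ (x * z) := by
      rw [Finset.sum_image]
      intro s hs s' hs' hss
      exact hpow_inj s (Finset.mem_range.1 hs) s' (Finset.mem_range.1 hs') hss
    rw [h1, himg, Finset.sum_erase_eq_sub (Finset.mem_univ 0), zero_mul, hψ0]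
    have h2 : ∑ x : E, ψ (x * z) = ∑ x : E, ψ x :=
      Fintype.sum_bijective (fun x : E => x * z) (by
        constructor
        · exact fun u v huv => mul_right_cancel₀ hz huv
        · intro u; exact ⟨u * z⁻¹, by field_simp⟩) _ _ (fun x => rfl)
    rw [h2, hsumE]
    ring
  -- classification of Gauss periods
  have hclass : ∀ a : ℕ, ∃ T : ℕ, T ≤ 2 ∧ η a = (q : ℂ) * T - 3 := by
    intro a
    have hpowsplit : ∀ j : ℕ, γ' ^ (a + N * j) = γ' ^ a * γ ^ j := by
      intro j
      rw [hγ, pow_add, ← pow_mul]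
    have h1 : η a = ∑ i ∈ Finset.range 3, ∑ s ∈ Finset.range (q - 1),
        ψ (γ' ^ a * γ ^ (i + 3 * s)) := by
      rw [hη a]
      simp_rw [hpowsplit]
      rw [hk]
      exact helper_sum_mul 3 (q - 1) (by norm_num) (fun j => ψ (γ' ^ a * γ ^ j))
    have h3 : ∀ i : ℕ, ∑ s ∈ Finset.range (q - 1), ψ (γ' ^ a * γ ^ (i + 3 * s))
        = (∑ c ∈ Fs, ψ (c * (γ' ^ a * γ ^ i))) - 1 := by
      intro i
      rw [hFeq, Finset.sum_insert h0nmem, Finset.sum_image (by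
        intro s hs s' hs' hss
        exact hginj s (Finset.mem_range.1 hs) s' (Finset.mem_range.1 hs') hss),
        zero_mul, hψ0]
      have h4 : ∀ s ∈ Finset.range (q - 1),
          ψ (γ' ^ a * γ ^ (i + 3 * s)) = ψ ((γ ^ 3) ^ s * (γ' ^ a * γ ^ i)) := by
        intro s _
        congr 1
        rw [pow_add, pow_mul]
        ring
      rw [Finset.sum_congr rfl h4]
      ring
    set y := γ' ^ a with hy_def
    have hyne : y ≠ 0 := pow_ne_zero a hγ'ne
    set cond : ℕ → Prop := fun i => ∀ c ∈ Fs, Algebra.trace (ZMod p) E (c * (y * γ ^ i)) = 0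
      with hcond_def
    have h5 : η a = ∑ i ∈ Finset.range 3, ((if cond i then (q : ℂ) else 0) - 1) := by
      rw [h1]
      exact Finset.sum_congr rfl fun i _ => by rw [h3 i, hline]
    set T : ℕ := ((Finset.range 3).filter cond).card with hT_def
    have h6 : η a = (q : ℂ) * T - 3 := by
      rw [h5, Finset.sum_sub_distrib, Finset.sum_const, Finset.card_range,
        ← Finset.sum_filter, Finset.sum_const, ← hT_def]
      ring
    refine ⟨T, ?_, h6⟩
    by_contra hT3
    have hT3' : T = 3 := by
      have := Finset.card_filter_le (Finset.range 3) cond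
      rw [Finset.card_range] at this
      omega
    have hall : ∀ i ∈ Finset.range 3, cond i := by
      have hsub : (Finset.range 3).filter cond = Finset.range 3 :=
        Finset.eq_of_subset_of_card_le (Finset.filter_subset _ _)
          (by rw [Finset.card_range]; omega)
      intro i hi
      have : i ∈ (Finset.range 3).filter cond := by rw [hsub]; exact hi
      exact (Finset.mem_filter.1 this).2
    have hzero : ∀ z : E, Algebra.trace (ZMod p) E (y * z) = 0 := by
      intro z
      obtain ⟨a₀, ha₀, b₀, hb₀, c₀, hc₀, rfl⟩ := hspan z
      have e : y * (a₀ + b₀ * γ + c₀ * γ ^ 2)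
          = a₀ * (y * γ ^ 0) + (b₀ * (y * γ ^ 1) + c₀ * (y * γ ^ 2)) := by ring
      rw [e, map_add, map_add]
      rw [hall 0 (by norm_num) a₀ ha₀, hall 1 (by norm_num) b₀ hb₀,
        hall 2 (by norm_num) c₀ hc₀]
      ring
    obtain ⟨b, hb⟩ := hnd y hyne
    exact hb (hzero b)
  -- first moment
  have hM1 : ∑ a ∈ Finset.range N, η a = -1 := by
    have h1 : ∑ a ∈ Finset.range N, η a
        = ∑ a ∈ Finset.range N, ∑ j ∈ Finset.range k, ψ (γ' ^ (a + N * j)) :=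
      Finset.sum_congr rfl fun a _ => hη a
    rw [h1, ← helper_sum_mul N k hNpos (fun u => ψ (γ' ^ u))]
    have h2 : N * k = q ^ 3 - 1 := by rw [← hkN]; ring
    rw [h2]
    have h3 : ∀ s ∈ Finset.range (q ^ 3 - 1), ψ (γ' ^ s) = ψ (γ' ^ s * 1) := by
      intro s _; rw [mul_one]
    rw [Finset.sum_congr rfl h3, hstar 1 one_ne_zero]
  -- the unique s₀ with γ^s₀ = -1
  obtain ⟨s₀, hs₀k, hs₀⟩ : ∃ s₀, s₀ < k ∧ γ ^ s₀ = -1 := by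
    have hneg1 : (-1 : E) ^ k = 1 := by
      rcases hp.eq_two_or_odd' with h2 | hodd
      · have hchar2 : (2 : E) = 0 := by
          subst h2
          exact_mod_cast CharP.cast_eq_zero E 2
        have : (-1 : E) = 1 := by linear_combination -hchar2
        rw [this, one_pow]
      · have hoddq : Odd q := by rw [hq]; exact hodd.pow
        have : Even (q - 1) := Nat.Odd.sub_odd hoddq odd_one
        have hevenk : Even k := by rw [hk]; exact this.mul_left 3
        exact hevenk.neg_one_pow
    have hne : (-1 : E) ≠ 0 := neg_ne_zero.mpr one_ne_zero
    obtain ⟨s, hs, hseq⟩ := hsurj (-1) hne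
    have h1 : γ' ^ (s * k) = 1 := by rw [pow_mul, hseq, hneg1]
    have hdvd : (q ^ 3 - 1) ∣ s * k := by
      rw [← hγ']; exact orderOf_dvd_of_pow_eq_one h1
    have hNs : N ∣ s := by
      rw [← hkN, mul_comm k N] at hdvd
      rw [mul_comm N k, mul_comm s k] at hdvd
      exact (Nat.mul_dvd_mul_iff_left hkpos).1 hdvd
    obtain ⟨u, rfl⟩ := hNs
    refine ⟨u % k, Nat.mod_lt _ hkpos, ?_⟩
    have h2 : γ ^ (u % k) = γ ^ u := by rw [← hγk]; exact pow_mod_orderOf _ _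
    rw [h2, hγ, ← pow_mul]
    exact hseq
  -- second moment
  have hM2 : ∑ a ∈ Finset.range N, η a * η a = ((q : ℂ) ^ 3 - 1) - ((k : ℂ) - 1) := by
    have step1 : ∀ a ∈ Finset.range N, η a * η a
        = ∑ j ∈ Finset.range k, ∑ s ∈ Finset.range k,
            ψ (γ' ^ (a + N * j) * (1 + γ ^ s)) := by
      intro a _
      rw [hη, Finset.sum_mul_sum]
      refine Finset.sum_congr rfl fun j _ => ?_
      set F : ℕ → ℂ := fun j' => ψ (γ' ^ (a + N * j) + γ' ^ a * γ ^ j') with hF_def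
      have hFper : ∀ n, F (n + k) = F n := by
        intro n
        rw [hF_def]
        simp only
        rw [pow_add γ n k, hγk1, mul_one]
      have hFval : ∀ j', ψ (γ' ^ (a + N * j)) * ψ (γ' ^ (a + N * j')) = F j' := by
        intro j'
        rw [hF_def, ← hψadd]
        simp only
        congr 2
        rw [hγ, pow_add, ← pow_mul]
      rw [Finset.sum_congr rfl fun j' _ => hFval j']
      rw [← helper_shift k F hFper j]
      refine Finset.sum_congr rfl fun s _ => ?_
      rw [hF_def]
      simp only
      congr 1
      have e : γ' ^ a * γ ^ (j + s) = γ' ^ (a + N * j) * γ ^ s := by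
        rw [pow_add γ j s, pow_add γ' a (N * j), hγ, ← pow_mul]
        ring
      rw [e]
      ring
    rw [Finset.sum_congr rfl step1]
    -- swap sums and evaluate
    have swap1 : ∑ a ∈ Finset.range N, ∑ j ∈ Finset.range k, ∑ s ∈ Finset.range k,
        ψ (γ' ^ (a + N * j) * (1 + γ ^ s))
        = ∑ s ∈ Finset.range k, ∑ a ∈ Finset.range N, ∑ j ∈ Finset.range k,
            ψ (γ' ^ (a + N * j) * (1 + γ ^ s)) := by
      have inner : ∀ a : ℕ, ∑ j ∈ Finset.range k, ∑ s ∈ Finset.range k,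
          ψ (γ' ^ (a + N * j) * (1 + γ ^ s))
          = ∑ s ∈ Finset.range k, ∑ j ∈ Finset.range k,
              ψ (γ' ^ (a + N * j) * (1 + γ ^ s)) := fun a => Finset.sum_comm
      rw [Finset.sum_congr rfl fun a _ => inner a]
      exact Finset.sum_comm
    rw [swap1]
    -- evaluate the inner double sum for each s
    have inner2 : ∀ s ∈ Finset.range k, ∑ a ∈ Finset.range N, ∑ j ∈ Finset.range k,
        ψ (γ' ^ (a + N * j) * (1 + γ ^ s))
        = if s = s₀ then ((q : ℂ) ^ 3 - 1) else -1 := by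
      intro s hsk'
      rw [Finset.mem_range] at hsk'
      rw [← helper_sum_mul N k hNpos (fun u => ψ (γ' ^ u * (1 + γ ^ s)))]
      have h2 : N * k = q ^ 3 - 1 := by rw [← hkN]; ring
      rw [h2]
      split_ifs with hss
      · subst hss
        have hz : (1 : E) + γ ^ s = 0 := by rw [hs₀]; ring
        have h3 : ∀ u ∈ Finset.range (q ^ 3 - 1), ψ (γ' ^ u * (1 + γ ^ s)) = 1 := by
          intro u _
          rw [hz, mul_zero, hψ0]
        rw [Finset.sum_congr rfl h3, Finset.sum_const, Finset.card_range, nsmul_eq_mul,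
          mul_one, Nat.cast_sub (Nat.one_le_pow 3 q (by omega))]
        push_cast
        ring
      · have hz : (1 : E) + γ ^ s ≠ 0 := by
          intro h
          apply hss
          have hγs : γ ^ s = -1 := by linear_combination h
          exact hγinj s hsk' s₀ hs₀k (by rw [hγs, hs₀])
        exact hstar _ hz
    rw [Finset.sum_congr rfl inner2]
    rw [Finset.sum_eq_sum_sdiff_singleton_add (Finset.mem_range.2 hs₀k)
      (fun s => if s = s₀ then ((q : ℂ) ^ 3 - 1) else -1)]
    have hdiff : ∀ s ∈ Finset.range k \ {s₀},
        (if s = s₀ then ((q : ℂ) ^ 3 - 1) else -1) = -1 := by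
      intro s hs
      rw [Finset.mem_sdiff, Finset.mem_singleton] at hs
      rw [if_neg hs.2]
    rw [Finset.sum_congr rfl hdiff, Finset.sum_const, if_pos rfl,
      Finset.card_sdiff_of_subset (Finset.singleton_subset_iff.2 (Finset.mem_range.2 hs₀k)),
      Finset.card_range, Finset.card_singleton, nsmul_eq_mul,
      Nat.cast_sub (by omega : 1 ≤ k)]
    push_cast
    ring
  -- transfer sums to ZMod N
  have hzmod : ∀ f : ℕ → ℂ, ∑ x : ZMod N, f x.val = ∑ a ∈ Finset.range N, f a := by
    intro f
    refine Finset.sum_nbij' (fun x : ZMod N => x.val) (fun a : ℕ => (a : ZMod N))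
      ?_ ?_ ?_ ?_ ?_
    · intro x _; exact Finset.mem_range.2 (ZMod.val_lt x)
    · intro a _; exact Finset.mem_univ _
    · intro x _; exact ZMod.natCast_rightInverse x
    · intro a ha; exact ZMod.val_cast_of_lt (Finset.mem_range.1 ha)
    · intro x _; rfl
  -- each Gauss period is one of the three values
  have hval3 : ∀ x : ZMod N, η x.val = -3 ∨ η x.val = (q : ℂ) - 3
      ∨ η x.val = 2 * (q : ℂ) - 3 := by
    intro x
    obtain ⟨T, hT, hvalT⟩ := hclass x.val
    interval_cases T
    · left; rw [hvalT]; push_cast; ring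
    · right; left; rw [hvalT]; push_cast; ring
    · right; right; rw [hvalT]; push_cast; ring
  have hQne : (q : ℂ) ≠ 0 := Nat.cast_ne_zero.2 (by omega)
  -- the three sets are pairwise disjoint and cover everything
  have hd12 : Disjoint I₁ I₂ := by
    rw [Finset.disjoint_left]
    intro x h1 h2
    rw [hI₁ x] at h1
    rw [hI₂ x] at h2
    apply hQne
    linear_combination h1 - h2
  have hd13 : Disjoint I₁ I₃ := by
    rw [Finset.disjoint_left]
    intro x h1 h2
    rw [hI₁ x] at h1
    rw [hI₃ x] at h2
    apply hQne
    linear_combination (h1 - h2) / 2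
  have hd23 : Disjoint I₂ I₃ := by
    rw [Finset.disjoint_left]
    intro x h1 h2
    rw [hI₂ x] at h1
    rw [hI₃ x] at h2
    apply hQne
    linear_combination h1 - h2
  have hd1_23 : Disjoint I₁ (I₂ ∪ I₃) := Finset.disjoint_union_right.2 ⟨hd12, hd13⟩
  have hcover : Finset.univ = I₁ ∪ (I₂ ∪ I₃) := by
    refine (Finset.eq_univ_of_forall ?_).symm
    intro x
    rw [Finset.mem_union, Finset.mem_union, hI₁ x, hI₂ x, hI₃ x]
    rcases hval3 x with h | h | h
    · exact Or.inl h
    · exact Or.inr (Or.inl h)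
    · exact Or.inr (Or.inr h)
  -- cardinalities
  have hcards : I₁.card + (I₂.card + I₃.card) = N := by
    rw [← Finset.card_union_of_disjoint hd23, ← Finset.card_union_of_disjoint hd1_23,
      ← hcover, Finset.card_univ, ZMod.card N]
  -- sums over the partition
  have hsplit : ∀ f : ZMod N → ℂ, ∑ x : ZMod N, f x
      = ∑ x ∈ I₁, f x + (∑ x ∈ I₂, f x + ∑ x ∈ I₃, f x) := by
    intro f
    rw [← Finset.sum_union hd23, ← Finset.sum_union hd1_23, ← hcover]
  have hsum1 : (-3 : ℂ) * I₁.card + (((q : ℂ) - 3) * I₂.card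
      + (2 * (q : ℂ) - 3) * I₃.card) = -1 := by
    have c1 : ∀ x ∈ I₁, η x.val = (-3 : ℂ) := fun x hx => (hI₁ x).1 hx
    have c2 : ∀ x ∈ I₂, η x.val = (q : ℂ) - 3 := fun x hx => (hI₂ x).1 hx
    have c3 : ∀ x ∈ I₃, η x.val = 2 * (q : ℂ) - 3 := fun x hx => (hI₃ x).1 hx
    have h1 := hsplit (fun x => η x.val)
    rw [hzmod (fun a => η a), hM1, Finset.sum_congr rfl c1, Finset.sum_congr rfl c2,
      Finset.sum_congr rfl c3] at h1
    simp only [Finset.sum_const, nsmul_eq_mul] at h1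
    linear_combination -h1
  have hsum2 : (9 : ℂ) * I₁.card + ((((q : ℂ) - 3) * ((q : ℂ) - 3)) * I₂.card
      + ((2 * (q : ℂ) - 3) * (2 * (q : ℂ) - 3)) * I₃.card)
      = ((q : ℂ) ^ 3 - 1) - ((k : ℂ) - 1) := by
    have c1 : ∀ x ∈ I₁, η x.val * η x.val = (9 : ℂ) := fun x hx => by
      rw [(hI₁ x).1 hx]; norm_num
    have c2 : ∀ x ∈ I₂, η x.val * η x.val = ((q : ℂ) - 3) * ((q : ℂ) - 3) := fun x hx => by
      rw [(hI₂ x).1 hx]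
    have c3 : ∀ x ∈ I₃, η x.val * η x.val
        = (2 * (q : ℂ) - 3) * (2 * (q : ℂ) - 3) := fun x hx => by
      rw [(hI₃ x).1 hx]
    have h1 := hsplit (fun x => η x.val * η x.val)
    rw [hzmod (fun a => η a * η a), hM2, Finset.sum_congr rfl c1, Finset.sum_congr rfl c2,
      Finset.sum_congr rfl c3] at h1
    simp only [Finset.sum_const, nsmul_eq_mul] at h1
    linear_combination -h1
  -- solve the linear system
  set Q : ℂ := (q : ℂ) with hQ_def
  set x1 : ℂ := (I₁.card : ℂ) with hx1_def
  set x2 : ℂ := (I₂.card : ℂ) with hx2_def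
  set x3 : ℂ := (I₃.card : ℂ) with hx3_def
  have e0 : x1 + (x2 + x3) = (N : ℂ) := by
    rw [hx1_def, hx2_def, hx3_def]
    exact_mod_cast congrArg (Nat.cast : ℕ → ℂ) hcards
  have eN : 3 * (N : ℂ) = Q * Q + Q + 1 := by
    rw [hQ_def]
    exact_mod_cast congrArg (Nat.cast : ℕ → ℂ) h3N
  have ekC : (k : ℂ) = 3 * (Q - 1) := by
    rw [hQ_def, hk]
    push_cast [Nat.cast_sub (by omega : 1 ≤ q)]
    ring
  have e2' : 9 * x1 + ((Q - 3) * (Q - 3) * x2 + (2 * Q - 3) * (2 * Q - 3) * x3)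
      = Q ^ 3 - 3 * Q + 3 := by
    rw [ekC] at hsum2
    linear_combination hsum2
  have e1' : (-3) * x1 + ((Q - 3) * x2 + (2 * Q - 3) * x3) = -1 := hsum1
  -- x3 = 1
  have h2Q : 2 * Q ^ 2 * x3 = 2 * Q ^ 2 := by
    linear_combination e2' - (Q - 6) * e1' + (9 - 3 * Q) * e0 + (3 - Q) * eN
  have hx3v : x3 = 1 := by
    have h2Qne : (2 : ℂ) * Q ^ 2 ≠ 0 := by
      intro h
      rcases mul_eq_zero.1 h with h | h
      · norm_num at h
      · exact hQne ((pow_eq_zero_iff (two_ne_zero)).1 h)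
    have := mul_left_cancel₀ h2Qne (h2Q.trans (mul_one (2 * Q ^ 2)).symm)
    exact this
  have hQx2 : Q * x2 = Q * (Q - 1) := by
    linear_combination e1' + 3 * e0 + eN - 2 * Q * hx3v
  have hx2v : x2 = Q - 1 := mul_left_cancel₀ hQne hQx2
  have hx1v : 3 * x1 = (Q - 1) ^ 2 := by
    linear_combination 3 * e0 + eN - 3 * hx2v - 3 * hx3v
  -- convert back to ℕ / ℚ
  have hI3card : I₃.card = 1 := by
    have : (I₃.card : ℂ) = ((1 : ℕ) : ℂ) := by rw [← hx3_def, hx3v]; norm_num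
    exact_mod_cast this
  have hI2card : I₂.card = q - 1 := by
    have : (I₂.card : ℂ) = ((q - 1 : ℕ) : ℂ) := by
      rw [← hx2_def, hx2v, hQ_def, Nat.cast_sub (by omega : 1 ≤ q), Nat.cast_one]
    exact_mod_cast this
  have hI1card : 3 * I₁.card = (q - 1) ^ 2 := by
    have hcast : ((3 * I₁.card : ℕ) : ℂ) = (((q - 1) ^ 2 : ℕ) : ℂ) := by
      push_cast [Nat.cast_sub (by omega : 1 ≤ q)]
      rw [← hQ_def, ← hx1_def]
      linear_combination hx1v
    exact_mod_cast hcast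
  -- conclusion
  refine ⟨?_, ?_, ?_, hI3card⟩
  · ext c
    simp only [Set.mem_setOf_eq, Set.mem_insert_iff, Set.mem_singleton_iff]
    constructor
    · rintro ⟨a, _, rfl⟩
      obtain ⟨T, hT, hvalT⟩ := hclass a
      interval_cases T
      · left; rw [hvalT]; push_cast; ring
      · right; left; rw [hvalT]; push_cast; ring
      · right; right; rw [hvalT]; push_cast; ring
    · have pick : ∀ (J : Finset (ZMod N)), 0 < J.card → ∀ v : ℂ,
          (∀ x : ZMod N, x ∈ J ↔ η x.val = v) → ∃ a, a < N ∧ η a = v := by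
        intro J hJ v hJv
        obtain ⟨x, hx⟩ := Finset.card_pos.1 hJ
        exact ⟨x.val, ZMod.val_lt x, (hJv x).1 hx⟩
      rintro (rfl | rfl | rfl)
      · refine pick I₁ ?_ (-3) hI₁
        have h9 : 9 ≤ (q - 1) ^ 2 := by
          have : 3 ≤ q - 1 := by omega
          calc 9 = 3 * 3 := by norm_num
            _ ≤ (q - 1) * (q - 1) := Nat.mul_le_mul this this
            _ = (q - 1) ^ 2 := by ring
        omega
      · exact pick I₂ (by rw [hI2card]; omega) ((q : ℂ) - 3) hI₂
      · exact pick I₃ (by rw [hI3card]; omega) (2 * (q : ℂ) - 3) hI₃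
  · rw [eq_div_iff (by norm_num : (3 : ℚ) ≠ 0)]
    have hcast : ((3 * I₁.card : ℕ) : ℚ) = (((q - 1) ^ 2 : ℕ) : ℚ) := by
      exact_mod_cast congrArg (Nat.cast : ℕ → ℚ) hI1card
    push_cast [Nat.cast_sub (by omega : 1 ≤ q)] at hcast
    linarith [hcast]
  · have hcast : ((I₂.card : ℕ) : ℚ) = ((q - 1 : ℕ) : ℚ) := by
      exact_mod_cast congrArg (Nat.cast : ℕ → ℚ) hI2card
    push_cast [Nat.cast_sub (by omega : 1 ≤ q)] at hcast
    linarith [hcast]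
end
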